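/- Let D be an N-periodic upper-triangular difference operator of order m (i.e. its coefficient of 𝒯^i vanishes unless 0 ≤ i ≤ m) and let Q be any N-periodic difference operator. Then the operator π_D(Q) := D·r(QD) − r(DQ)·D is again an upper-triangular difference operator of order at most m: its coefficient of 𝒯^i vanishes for all i < 0 and all i > m. -/

import Mathlib

noncomputable section

/-- A (pseudo-)difference operator, given by its coefficient sequences:
`a i j` is the `j`-th entry of the coefficient sequence of `𝒯^i`. -/
abbrev DOp : Type := ℤ → ℤ → ℝ

namespace DOp

/-- Product of difference operators, determined by `𝒯 ∘ a = (𝒯a) ∘ 𝒯`: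
the coefficient of `𝒯^n` in `a * b` is `Σ_{i+j=n} a^i · 𝒯^i(b^j)`. -/
def mul (a b : DOp) : DOp := fun n j => ∑ᶠ i : ℤ, a i j * b (n - i) (j + i)

/-- The identity difference operator. -/
def one : DOp := fun n j => if n = 0 then 1 else 0

/-- The r-matrix `r(Σ_i a^i 𝒯^i) = ½(Σ_{i>0} a^i 𝒯^i − Σ_{i<0} a^i 𝒯^i)`. -/
def rmat (a : DOp) : DOp := fun n j =>
  if 0 < n then a n j / 2 else if n < 0 then -(a n j) / 2 else 0

/-- A difference operator is a *finite* formal sum. -/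
def FinSupp (a : DOp) : Prop := {i : ℤ | a i ≠ 0}.Finite

/-- `N`-periodicity of all coefficient sequences. -/
def Periodic (N : ℕ) (a : DOp) : Prop := ∀ i j, a i (j + (N : ℤ)) = a i j

/-- The trace of an `N`-periodic difference operator: `Tr D = Σ_{j=1}^N a^0_j`. -/
def trace (N : ℕ) (a : DOp) : ℝ := ∑ j ∈ Finset.Icc (1 : ℤ) (N : ℤ), a 0 j

/-- The commutator `[A, B] = AB − BA` of difference operators. -/
def bracket (a b : DOp) : DOp := mul a b - mul b a

/-- An order-zero operator: termwise multiplication by the sequence `α`. -/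
def ord0 (α : ℤ → ℝ) : DOp := fun n j => if n = 0 then α j else 0

/-- The operator `c ∘ 𝒯^k` for a sequence `c`. -/
def singleOp (k : ℤ) (c : ℤ → ℝ) : DOp := fun n j => if n = k then c j else 0

/-- The pure shift operator `𝒯^k`. -/
def Tpow (k : ℤ) : DOp := singleOp k fun _ => 1

end DOp

open Function

/-- The shear `(i, k) ↦ (i + k, i)` on `ℤ × ℤ`, used to reindex double sums. -/
def shearEquiv : ℤ × ℤ ≃ ℤ × ℤ where
  toFun p := (p.1 + p.2, p.1)
  invFun p := (p.2, p.1 - p.2)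
  left_inv p := by simp
  right_inv p := by simp

/-- Pointwise associativity `D·(Q·D) = (D·Q)·D` for an order-`m` upper-triangular `D`
and a finitely supported `Q`. -/
lemma DOp.mul_assoc_pt (m : ℕ) (D Q : DOp)
    (hD : ∀ i : ℤ, i < 0 ∨ (m : ℤ) < i → ∀ j, D i j = 0)
    (hQ : DOp.FinSupp Q) (n j : ℤ) :
    DOp.mul D (DOp.mul Q D) n j = DOp.mul (DOp.mul D Q) D n j := by
  have hDmem : ∀ {i x : ℤ}, D i x ≠ 0 → 0 ≤ i ∧ i ≤ (m : ℤ) := fun {i x} h =>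
    ⟨le_of_not_gt fun hc => h (hD i (Or.inl hc) x),
     le_of_not_gt fun hc => h (hD i (Or.inr hc) x)⟩
  set F : ℤ × ℤ → ℝ := fun p =>
    D p.1 j * (Q p.2 (j + p.1) * D (n - p.1 - p.2) (j + p.1 + p.2)) with hF
  set G : ℤ × ℤ → ℝ := fun p =>
    (D p.2 j * Q (p.1 - p.2) (j + p.2)) * D (n - p.1) (j + p.1) with hG
  have hFG : ∀ p, F p = G (shearEquiv p) := by
    rintro ⟨i, k⟩
    simp only [hF, hG, shearEquiv, Equiv.coe_fn_mk, add_sub_cancel_left]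
    rw [sub_sub, add_assoc, mul_assoc]
  have hFsupp : (support F).Finite := by
    apply Set.Finite.subset ((Set.finite_Icc (0 : ℤ) (m : ℤ)).prod hQ)
    rintro ⟨i, k⟩ hp
    simp only [mem_support, hF] at hp
    have h1 : D i j ≠ 0 := fun h => hp (by simp [h])
    have h2 : Q k ≠ 0 := fun h => hp (by simp [h])
    exact ⟨Set.mem_Icc.2 (hDmem h1), h2⟩
  have hGsupp : (support G).Finite := by
    apply (hFsupp.image shearEquiv).subset
    intro q hq
    refine ⟨shearEquiv.symm q, ?_, by simp⟩
    rw [mem_support, hFG (shearEquiv.symm q), Equiv.apply_symm_apply]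
    exact hq
  calc DOp.mul D (DOp.mul Q D) n j
      = ∑ᶠ (i : ℤ) (k : ℤ), F (i, k) := by
        refine finsum_congr fun i => ?_
        refine mul_finsum _ (D i j)
    _ = ∑ᶠ p : ℤ × ℤ, F p := (finsum_curry F hFsupp).symm
    _ = ∑ᶠ p : ℤ × ℤ, G p := finsum_eq_of_bijective shearEquiv shearEquiv.bijective hFG
    _ = ∑ᶠ (i : ℤ) (l : ℤ), G (i, l) := finsum_curry G hGsupp
    _ = DOp.mul (DOp.mul D Q) D n j := by
        refine finsum_congr fun i => ?_
        refine (finsum_mul (fun l => D l j * Q (i - l) (j + l)) (D (n - i) (j + i))).symm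

/-- If `D` is an `N`-periodic upper-triangular difference operator of
order `m` and `Q` is any `N`-periodic difference operator, then
`π_D(Q) = D·r(QD) − r(DQ)·D` is upper-triangular of order at most `m`:
its coefficient of `𝒯^i` vanishes for `i < 0` and for `i > m`. -/
theorem stmt5 (N m : ℕ) (D Q : DOp)
    (hD : ∀ i : ℤ, i < 0 ∨ (m : ℤ) < i → ∀ j, D i j = 0)
    (hDper : DOp.Periodic N D)
    (hQ : DOp.FinSupp Q) (hQper : DOp.Periodic N Q) :
    ∀ i : ℤ, i < 0 ∨ (m : ℤ) < i → ∀ j,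
      (DOp.mul D (DOp.rmat (DOp.mul Q D)) - DOp.mul (DOp.rmat (DOp.mul D Q)) D) i j = 0 := by
  intro n hn j
  have hDmem : ∀ {i x : ℤ}, D i x ≠ 0 → 0 ≤ i ∧ i ≤ (m : ℤ) := fun {i x} h =>
    ⟨le_of_not_gt fun hc => h (hD i (Or.inl hc) x),
     le_of_not_gt fun hc => h (hD i (Or.inr hc) x)⟩
  have hfinD : ∀ (g : ℤ → ℝ) (x : ℤ), (support fun i => D i x * g i).Finite := by
    intro g x
    apply (Set.finite_Icc (0 : ℤ) (m : ℤ)).subset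
    intro i hi
    simp only [mem_support] at hi
    exact Set.mem_Icc.2 (hDmem (left_ne_zero_of_mul hi))
  have hfinD2 : ∀ (g : ℤ → ℝ), (support fun i => g i * D (n - i) (j + i)).Finite := by
    intro g
    apply (Set.finite_Icc (n - (m : ℤ)) n).subset
    intro i hi
    simp only [mem_support] at hi
    obtain ⟨h1, h2⟩ := hDmem (right_ne_zero_of_mul hi)
    exact Set.mem_Icc.2 ⟨by omega, by omega⟩
  suffices H : ∀ c : ℝ,
      (∀ (C : DOp) (k x : ℤ), n - (m : ℤ) ≤ k → k ≤ n → DOp.rmat C k x = c * C k x) →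
      (DOp.mul D (DOp.rmat (DOp.mul Q D)) - DOp.mul (DOp.rmat (DOp.mul D Q)) D) n j = 0 by
    rcases hn with h | h
    · refine H (-(1 : ℝ) / 2) fun C k x h1 h2 => ?_
      rw [DOp.rmat, if_neg (by omega), if_pos (by omega)]
      ring
    · refine H ((1 : ℝ) / 2) fun C k x h1 h2 => ?_
      rw [DOp.rmat, if_pos (by omega)]
      ring
  intro c hr
  have e1 : DOp.mul D (DOp.rmat (DOp.mul Q D)) n j
      = c * DOp.mul D (DOp.mul Q D) n j := by
    have step : ∀ i : ℤ, D i j * DOp.rmat (DOp.mul Q D) (n - i) (j + i)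
        = c * (D i j * DOp.mul Q D (n - i) (j + i)) := by
      intro i
      rcases eq_or_ne (D i j) 0 with h0 | h0
      · simp [h0]
      · obtain ⟨hi1, hi2⟩ := hDmem h0
        rw [hr _ _ _ (by omega) (by omega)]
        ring
    calc DOp.mul D (DOp.rmat (DOp.mul Q D)) n j
        = ∑ᶠ i : ℤ, c * (D i j * DOp.mul Q D (n - i) (j + i)) := finsum_congr step
      _ = c * DOp.mul D (DOp.mul Q D) n j :=
          (mul_finsum (fun i => D i j * DOp.mul Q D (n - i) (j + i)) c).symm
  have e2 : DOp.mul (DOp.rmat (DOp.mul D Q)) D n j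
      = c * DOp.mul (DOp.mul D Q) D n j := by
    have step : ∀ i : ℤ, DOp.rmat (DOp.mul D Q) i j * D (n - i) (j + i)
        = c * (DOp.mul D Q i j * D (n - i) (j + i)) := by
      intro i
      rcases eq_or_ne (D (n - i) (j + i)) 0 with h0 | h0
      · simp [h0]
      · obtain ⟨hi1, hi2⟩ := hDmem h0
        rw [hr _ _ _ (by omega) (by omega)]
        ring
    calc DOp.mul (DOp.rmat (DOp.mul D Q)) D n j
        = ∑ᶠ i : ℤ, c * (DOp.mul D Q i j * D (n - i) (j + i)) := finsum_congr step
      _ = c * DOp.mul (DOp.mul D Q) D n j := by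
          rw [← mul_finsum (fun i => DOp.mul D Q i j * D (n - i) (j + i)) c]
          rfl
  simp only [Pi.sub_apply]
  rw [e1, e2, DOp.mul_assoc_pt m D Q hD hQ n j, sub_self]
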